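/- In a many-to-one stable matching market, the number of distinct nonempty sets E_i^1, …, E_i^{k_i} of students that a fixed institution i can be assigned across all stable matchings is at most the number of students acceptable to i, i.e., k_i ≤ |E(i)|. -/

import Mathlib

open Finset

/-- A (many-to-one) matching market: acceptability edges, capacities, and
rank functions encoding strict preferences (lower rank = more preferred). -/
structure Market (S I : Type*) where
  E : Finset (S × I)
  q : I → ℕ
  prefS : S → I → ℕ
  prefI : I → S → ℕ

variable {S I : Type*} [DecidableEq S] [DecidableEq I]

/-- The edges of `M` incident to institution `i`. -/
def edgesOf (M : Finset (S × I)) (i : I) : Finset (S × I) :=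
  M.filter (fun e => e.2 = i)

/-- The set of students assigned to institution `i` under `M`. -/
def assigned (M : Finset (S × I)) (i : I) : Finset S :=
  (edgesOf M i).image Prod.fst

/-- `M` is a matching: it uses acceptable edges, each student is matched at most
once, and each institution `i` is matched to at most `q i` students. -/
def IsMatching (mkt : Market S I) (M : Finset (S × I)) : Prop :=
  M ⊆ mkt.E ∧ (∀ s : S, (M.filter (fun e => e.1 = s)).card ≤ 1) ∧
    ∀ i : I, (edgesOf M i).card ≤ mkt.q i

/-- `(s, i)` blocks `M`: it is an acceptable non-matching pair, `s` strictly prefers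
`i` to her assignment (being unmatched is worst), and `i` has a free seat or a
student it likes strictly less than `s`. -/
def Blocks (mkt : Market S I) (M : Finset (S × I)) (s : S) (i : I) : Prop :=
  (s, i) ∈ mkt.E ∧ (s, i) ∉ M ∧
    (∀ i' : I, (s, i') ∈ M → mkt.prefS s i < mkt.prefS s i') ∧
    ((edgesOf M i).card < mkt.q i ∨ ∃ s' ∈ assigned M i, mkt.prefI i s < mkt.prefI i s')

/-- A stable matching admits no blocking pair. -/
def IsStable (mkt : Market S I) (M : Finset (S × I)) : Prop :=
  IsMatching mkt M ∧ ∀ s i, ¬ Blocks mkt M s i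

-- helpers
lemma mem_assigned {M : Finset (S × I)} {i : I} {s : S} :
    s ∈ assigned M i ↔ (s, i) ∈ M := by
  unfold assigned edgesOf
  simp only [mem_image, mem_filter]
  constructor
  · rintro ⟨⟨a, b⟩, ⟨hM, hb⟩, ha⟩
    simp only at hb ha
    subst hb; subst ha; exact hM
  · intro h
    exact ⟨(s, i), ⟨h, rfl⟩, rfl⟩

lemma matched_once {mkt : Market S I} {M : Finset (S × I)} (hM : IsMatching mkt M)
    {s : S} {i j : I} (hi : (s, i) ∈ M) (hj : (s, j) ∈ M) : i = j := by
  have h := Finset.card_le_one.mp (hM.2.1 s) (s, i) (by simp [hi]) (s, j) (by simp [hj])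
  simpa using congrArg Prod.snd h

lemma card_assigned {M : Finset (S × I)} {i : I} :
    (assigned M i).card = (edgesOf M i).card := by
  unfold assigned
  apply Finset.card_image_of_injOn
  intro e he e' he' h
  have h2 : e.2 = i := (Finset.mem_filter.mp he).2
  have h2' : e'.2 = i := (Finset.mem_filter.mp he').2
  exact Prod.ext h (h2.trans h2'.symm)

lemma full_of_prefer {mkt : Market S I} {M : Finset (S × I)} (hst : IsStable mkt M)
    {t : S} {j : I} (hE : (t, j) ∈ mkt.E) (hnM : (t, j) ∉ M)
    (hpref : ∀ i', (t, i') ∈ M → mkt.prefS t j < mkt.prefS t i') :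
    mkt.q j ≤ (edgesOf M j).card ∧ ∀ u ∈ assigned M j, mkt.prefI j u ≤ mkt.prefI j t := by
  have hnb := hst.2 t j
  simp only [Blocks, not_and, not_or, not_lt, not_exists] at hnb
  have := hnb hE hnM hpref
  exact ⟨this.1, fun u hu => this.2 u hu⟩

lemma exists_better {mkt : Market S I} {M : Finset (S × I)} (hst : IsStable mkt M)
    {t : S} {j : I} (hE : (t, j) ∈ mkt.E) (hnM : (t, j) ∉ M)
    (hwit : ∃ s' ∈ assigned M j, mkt.prefI j t < mkt.prefI j s') :
    ∃ j', (t, j') ∈ M ∧ mkt.prefS t j' ≤ mkt.prefS t j := by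
  by_contra hcon
  push_neg at hcon
  exact hst.2 t j ⟨hE, hnM, fun i' hi' => hcon i' hi', Or.inr hwit⟩

open Classical in
/-- Students that institution `j` gains in `M'` and who strictly prefer `j`
to their `M`-assignment. -/
noncomputable def Aset (mkt : Market S I) (M M' : Finset (S × I)) (j : I) : Finset S :=
  ((assigned M' j) \ (assigned M j)).filter
    (fun t => ∀ i', (t, i') ∈ M → mkt.prefS t j < mkt.prefS t i')

/-- Students that institution `j` loses when passing from `M` to `M'`. -/
def Bset (M M' : Finset (S × I)) (j : I) : Finset S :=
  assigned M j \ assigned M' j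

lemma mem_Aset {mkt : Market S I} {M M' : Finset (S × I)} {j : I} {t : S} :
    t ∈ Aset mkt M M' j ↔
      t ∈ assigned M' j ∧ t ∉ assigned M j ∧
        ∀ i', (t, i') ∈ M → mkt.prefS t j < mkt.prefS t i' := by
  classical
  simp [Aset, Finset.mem_filter, Finset.mem_sdiff, and_assoc]

lemma key [Fintype I] (mkt : Market S I)
    (hstrictS : ∀ s, Function.Injective (mkt.prefS s))
    (hstrictI : ∀ i, Function.Injective (mkt.prefI i))
    {M M' : Finset (S × I)} (hM : IsStable mkt M) (hM' : IsStable mkt M')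
    {i : I} {s : S}
    (hsF : s ∈ assigned M i) (hsF' : s ∈ assigned M' i)
    (hmaxF : ∀ u ∈ assigned M i, mkt.prefI i u ≤ mkt.prefI i s)
    (hmaxF' : ∀ u ∈ assigned M' i, mkt.prefI i u ≤ mkt.prefI i s)
    {t0 : S} (ht0 : t0 ∈ assigned M i) (ht0' : t0 ∉ assigned M' i) :
    False := by
  classical
  -- consequences of stability of M for members of Aset
  have hL1 : ∀ j, ∀ t ∈ Aset mkt M M' j, mkt.q j ≤ (edgesOf M j).card ∧
      ∀ u ∈ assigned M j, mkt.prefI j u ≤ mkt.prefI j t := by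
    intro j t ht
    obtain ⟨ht1, ht2, ht3⟩ := mem_Aset.mp ht
    exact full_of_prefer hM (hM'.1.1 (mem_assigned.mp ht1))
      (fun h => ht2 (mem_assigned.mpr h)) ht3
  -- a student matched in M to j, not in M' to j, with a worse M'-student of j,
  -- must be in some Aset
  have hinA : ∀ (u : S) (j : I), (u, j) ∈ M → u ∉ assigned M' j →
      (∃ w ∈ assigned M' j, mkt.prefI j u < mkt.prefI j w) →
      ∃ j'', u ∈ Aset mkt M M' j'' := by
    intro u j huM hu' hwit
    obtain ⟨j'', hj''M', hj''le⟩ := exists_better hM' (hM.1.1 huM)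
      (fun h => hu' (mem_assigned.mpr h)) hwit
    have hne : j'' ≠ j := fun h => hu' (mem_assigned.mpr (h ▸ hj''M'))
    have hlt : mkt.prefS u j'' < mkt.prefS u j :=
      lt_of_le_of_ne hj''le (fun h => hne (hstrictS u h))
    refine ⟨j'', mem_Aset.mpr ⟨mem_assigned.mpr hj''M', ?_, ?_⟩⟩
    · intro hmem
      exact hne (matched_once hM.1 (mem_assigned.mp hmem) huM)
    · intro i' hi'
      have h : i' = j := matched_once hM.1 hi' huM
      exact h ▸ hlt
  -- every abandoned student of a j with nonempty Aset is in some Aset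
  have hL3 : ∀ j, (Aset mkt M M' j).Nonempty → ∀ u ∈ Bset M M' j,
      ∃ j'', u ∈ Aset mkt M M' j'' := by
    rintro j ⟨t, htA⟩ u hu
    obtain ⟨huM, huM'⟩ := Finset.mem_sdiff.mp hu
    obtain ⟨htM', htM, -⟩ := mem_Aset.mp htA
    have hle := (hL1 j t htA).2 u huM
    have hne : u ≠ t := fun h => htM (h ▸ huM)
    have hlt : mkt.prefI j u < mkt.prefI j t :=
      lt_of_le_of_ne hle (fun h => hne (hstrictI j h))
    exact hinA u j (mem_assigned.mp huM) huM' ⟨t, htM', hlt⟩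
  -- counting
  set J : Finset I := Finset.univ.filter (fun j => (Aset mkt M M' j).Nonempty) with hJ
  set 𝒜 : Finset S := Finset.univ.biUnion (Aset mkt M M') with h𝒜
  set ℬ : Finset S := J.biUnion (Bset M M') with hℬ
  have hBsubA : ℬ ⊆ 𝒜 := by
    intro u hu
    obtain ⟨j, hjJ, huB⟩ := Finset.mem_biUnion.mp hu
    have hjA : (Aset mkt M M' j).Nonempty := (Finset.mem_filter.mp hjJ).2
    obtain ⟨j'', hj''⟩ := hL3 j hjA u huB
    exact Finset.mem_biUnion.mpr ⟨j'', Finset.mem_univ _, hj''⟩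
  have hcard𝒜 : 𝒜.card = ∑ j, (Aset mkt M M' j).card := by
    apply Finset.card_biUnion
    intro x _ y _ hxy
    refine Finset.disjoint_left.mpr (fun t htx hty => hxy ?_)
    exact matched_once hM'.1 (mem_assigned.mp (mem_Aset.mp htx).1)
      (mem_assigned.mp (mem_Aset.mp hty).1)
  have hcardℬ : ℬ.card = ∑ j ∈ J, (Bset M M' j).card := by
    apply Finset.card_biUnion
    intro x _ y _ hxy
    refine Finset.disjoint_left.mpr (fun t htx hty => hxy ?_)
    exact matched_once hM.1 (mem_assigned.mp (Finset.mem_sdiff.mp htx).1)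
      (mem_assigned.mp (Finset.mem_sdiff.mp hty).1)
  have hAB : ∀ j ∈ J, (Aset mkt M M' j).card ≤ (Bset M M' j).card := by
    intro j hjJ
    obtain ⟨t, htA⟩ := (Finset.mem_filter.mp hjJ).2
    have hfull : (edgesOf M j).card = mkt.q j :=
      le_antisymm (hM.1.2.2 j) ((hL1 j t htA).1)
    have hMj : (assigned M j).card = mkt.q j := by rw [card_assigned, hfull]
    have hM'j : (assigned M' j).card ≤ mkt.q j := by
      rw [card_assigned]; exact hM'.1.2.2 j
    have hAsub : Aset mkt M M' j ⊆ assigned M' j \ assigned M j := by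
      intro u hu
      obtain ⟨h1, h2, -⟩ := mem_Aset.mp hu
      exact Finset.mem_sdiff.mpr ⟨h1, h2⟩
    have h4 := Finset.card_le_card hAsub
    have h1 : (assigned M' j \ assigned M j).card + (assigned M' j ∩ assigned M j).card
        = (assigned M' j).card := Finset.card_sdiff_add_card_inter _ _
    have h2 : (assigned M j \ assigned M' j).card + (assigned M j ∩ assigned M' j).card
        = (assigned M j).card := Finset.card_sdiff_add_card_inter _ _
    have h3 : (assigned M' j ∩ assigned M j).card = (assigned M j ∩ assigned M' j).card := by
      rw [Finset.inter_comm]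
    have hBj : (Bset M M' j).card = (assigned M j \ assigned M' j).card := rfl
    omega
  have hsumA : ∑ j, (Aset mkt M M' j).card = ∑ j ∈ J, (Aset mkt M M' j).card := by
    symm
    apply Finset.sum_subset (Finset.filter_subset _ _)
    intro j _ hj
    simp only [Finset.mem_filter, Finset.mem_univ, true_and] at hj
    have : Aset mkt M M' j = ∅ := Finset.not_nonempty_iff_eq_empty.mp hj
    simp [this]
  have hcardle : 𝒜.card ≤ ℬ.card := by
    rw [hcard𝒜, hcardℬ, hsumA]
    exact Finset.sum_le_sum hAB
  have hBA : ℬ = 𝒜 := Finset.eq_of_subset_of_card_le hBsubA hcardle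
  -- t0 is in some Aset
  have ht0A : ∃ j'', t0 ∈ Aset mkt M M' j'' := by
    apply hinA t0 i (mem_assigned.mp ht0) ht0'
    refine ⟨s, hsF', ?_⟩
    have hne : t0 ≠ s := fun h => ht0' (h ▸ hsF')
    exact lt_of_le_of_ne (hmaxF t0 ht0) (fun h => hne (hstrictI i h))
  obtain ⟨j0, ht0A⟩ := ht0A
  have ht0𝒜 : t0 ∈ 𝒜 := Finset.mem_biUnion.mpr ⟨j0, Finset.mem_univ _, ht0A⟩
  rw [← hBA] at ht0𝒜
  obtain ⟨j1, hj1J, ht0B⟩ := Finset.mem_biUnion.mp ht0𝒜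
  have hj1 : j1 = i := matched_once hM.1
    (mem_assigned.mp (Finset.mem_sdiff.mp ht0B).1) (mem_assigned.mp ht0)
  have hAi : (Aset mkt M M' i).Nonempty := by
    rw [hj1] at hj1J
    exact (Finset.mem_filter.mp hj1J).2
  obtain ⟨t', ht'⟩ := hAi
  obtain ⟨ht'M', ht'M, -⟩ := mem_Aset.mp ht'
  have h1 : mkt.prefI i s ≤ mkt.prefI i t' := (hL1 i t' ht').2 s hsF
  have h2 : mkt.prefI i t' ≤ mkt.prefI i s := hmaxF' t' ht'M'
  have hts : t' = s := hstrictI i (le_antisymm h2 h1)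
  exact ht'M (hts ▸ hsF)

/-- The number of distinct nonempty stable sets of an institution i is at most
the number of acceptable students of i. -/
theorem stmt5 [Fintype S] [Fintype I] (mkt : Market S I)
    (hstrictS : ∀ s, Function.Injective (mkt.prefS s))
    (hstrictI : ∀ i, Function.Injective (mkt.prefI i))
    (i : I) :
    {F : Finset S | F.Nonempty ∧ ∃ M, IsStable mkt M ∧ assigned M i = F}.ncard ≤
      (mkt.E.filter (fun e => e.2 = i)).card := by
  classical
  rcases Set.eq_empty_or_nonempty
      {F : Finset S | F.Nonempty ∧ ∃ M, IsStable mkt M ∧ assigned M i = F} with h | h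
  · rw [h]; simp
  · obtain ⟨F0, hF0⟩ := h
    obtain ⟨s0, -⟩ := hF0.1
    haveI : Nonempty S := ⟨s0⟩
    set f : Finset S → S × I := fun F =>
      if h : F.Nonempty then ((F.exists_max_image (mkt.prefI i) h).choose, i)
      else (Classical.arbitrary S, i) with hf
    have hval : ∀ (F : Finset S) (hF : F.Nonempty),
        f F = ((F.exists_max_image (mkt.prefI i) hF).choose, i) := by
      intro F hF
      simp only [hf, dif_pos hF]
    have hspec : ∀ (F : Finset S) (hF : F.Nonempty),
        (F.exists_max_image (mkt.prefI i) hF).choose ∈ F ∧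
          ∀ u ∈ F, mkt.prefI i u ≤
            mkt.prefI i (F.exists_max_image (mkt.prefI i) hF).choose := by
      intro F hF
      obtain ⟨h1, h2⟩ := (F.exists_max_image (mkt.prefI i) hF).choose_spec
      exact ⟨h1, h2⟩
    have hmaps : ∀ F ∈ {F : Finset S | F.Nonempty ∧ ∃ M, IsStable mkt M ∧ assigned M i = F},
        f F ∈ (((mkt.E.filter (fun e => e.2 = i)) : Finset (S × I)) : Set (S × I)) := by
      rintro F ⟨hF, M, hMst, hMF⟩
      rw [hval F hF]
      have hw : (F.exists_max_image (mkt.prefI i) hF).choose ∈ assigned M i := by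
        rw [hMF]; exact (hspec F hF).1
      have hM : ((F.exists_max_image (mkt.prefI i) hF).choose, i) ∈ M := mem_assigned.mp hw
      exact Finset.mem_coe.mpr (Finset.mem_filter.mpr ⟨hMst.1.1 hM, rfl⟩)
    have hinj : Set.InjOn f
        {F : Finset S | F.Nonempty ∧ ∃ M, IsStable mkt M ∧ assigned M i = F} := by
      rintro F ⟨hF, M, hMst, hMF⟩ F' ⟨hF', M', hM'st, hM'F'⟩ hff
      rw [hval F hF, hval F' hF'] at hff
      set s : S := (F.exists_max_image (mkt.prefI i) hF).choose with hs
      have hseq : s = (F'.exists_max_image (mkt.prefI i) hF').choose := by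
        have := congrArg Prod.fst hff
        simpa using this
      have hsF : s ∈ F := (hspec F hF).1
      have hsmaxF : ∀ u ∈ F, mkt.prefI i u ≤ mkt.prefI i s := (hspec F hF).2
      have hsF' : s ∈ F' := hseq ▸ (hspec F' hF').1
      have hsmaxF' : ∀ u ∈ F', mkt.prefI i u ≤ mkt.prefI i s := by
        intro u hu
        have := (hspec F' hF').2 u hu
        rw [← hseq] at this
        exact this
      by_contra hne
      have : ¬ (F ⊆ F') ∨ ¬ (F' ⊆ F) := by
        by_contra hcon
        push_neg at hcon
        exact hne (Finset.Subset.antisymm hcon.1 hcon.2)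
      have hsA : s ∈ assigned M i := by rw [hMF]; exact hsF
      have hsA' : s ∈ assigned M' i := by rw [hM'F']; exact hsF'
      have hmaxA : ∀ u ∈ assigned M i, mkt.prefI i u ≤ mkt.prefI i s := by
        rw [hMF]; exact hsmaxF
      have hmaxA' : ∀ u ∈ assigned M' i, mkt.prefI i u ≤ mkt.prefI i s := by
        rw [hM'F']; exact hsmaxF'
      rcases this with hns | hns
      · obtain ⟨t0, ht0F, ht0F'⟩ := Finset.not_subset.mp hns
        have h1 : t0 ∈ assigned M i := by rw [hMF]; exact ht0F
        have h2 : t0 ∉ assigned M' i := by rw [hM'F']; exact ht0F'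
        exact key mkt hstrictS hstrictI hMst hM'st hsA hsA' hmaxA hmaxA' h1 h2
      · obtain ⟨t0, ht0F', ht0F⟩ := Finset.not_subset.mp hns
        have h1 : t0 ∈ assigned M' i := by rw [hM'F']; exact ht0F'
        have h2 : t0 ∉ assigned M i := by rw [hMF]; exact ht0F
        exact key mkt hstrictS hstrictI hM'st hMst hsA' hsA hmaxA' hmaxA h1 h2
    have := Set.ncard_le_ncard_of_injOn f hmaps hinj (Finset.finite_toSet _)
    rwa [Set.ncard_coe_finset] at this
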